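/- With notation as in the Fock-space setting, the fifth iterated commutator is linear in creation/annihilation operators: [A,[A,[A,[A,[A,V]]]]] = 360 ∫ v₃(x−y,x−z) |φ(x)|² |φ(y)|² ( φ̄(z) a_z + φ(z) a*_z ) dx dy dz. -/

import Mathlib

set_option maxHeartbeats 4000000

section FockHelpers

variable {𝒜 : Type*} [Ring 𝒜] [Algebra ℂ 𝒜]

attribute [local instance 100] LieRing.ofAssociativeRing

omit [Algebra ℂ 𝒜] in
private lemma lie_mul' (A x y : 𝒜) : ⁅A, x * y⁆ = ⁅A, x⁆ * y + x * ⁅A, y⁆ := by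
  simp only [Ring.lie_def]; noncomm_ring

omit [Algebra ℂ 𝒜] in
private lemma sum_lie' {ι : Type*} (A : 𝒜) (s : Finset ι) (f : ι → 𝒜) :
    ⁅∑ i ∈ s, f i, A⁆ = ∑ i ∈ s, ⁅f i, A⁆ := by
  induction s using Finset.cons_induction with
  | empty => simp
  | cons a s ha ih => simp [Finset.sum_cons, add_lie, ih]

omit [Algebra ℂ 𝒜] in
private lemma lie_sum' {ι : Type*} (A : 𝒜) (s : Finset ι) (f : ι → 𝒜) :
    ⁅A, ∑ i ∈ s, f i⁆ = ∑ i ∈ s, ⁅A, f i⁆ := by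
  induction s using Finset.cons_induction with
  | empty => simp
  | cons a s ha ih => simp [Finset.sum_cons, lie_add, ih]

private lemma key5 (A u1 u2 u3 u4 u5 u6 : 𝒜) (c1 c2 c3 c4 c5 c6 : ℂ)
    (h1 : ⁅A,u1⁆ = c1 • 1) (h2 : ⁅A,u2⁆ = c2 • 1) (h3 : ⁅A,u3⁆ = c3 • 1)
    (h4 : ⁅A,u4⁆ = c4 • 1) (h5 : ⁅A,u5⁆ = c5 • 1) (h6 : ⁅A,u6⁆ = c6 • 1) :
    ⁅A, ⁅A, ⁅A, ⁅A, ⁅A, u1*u2*u3*(u4*u5*u6)⁆⁆⁆⁆⁆ =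
      (120:ℂ) • ( (c2*c3*c4*c5*c6) • u1 + (c1*c3*c4*c5*c6) • u2 + (c1*c2*c4*c5*c6) • u3
        + (c1*c2*c3*c5*c6) • u4 + (c1*c2*c3*c4*c6) • u5 + (c1*c2*c3*c4*c5) • u6 ) := by
  simp only [lie_mul', h1, h2, h3, h4, h5, h6, smul_mul_assoc, mul_smul_comm,
    one_mul, mul_one, add_mul, mul_add, lie_add, lie_smul, smul_add, smul_smul]
  module

private lemma sum3_swap13 {ι M : Type*} [Fintype ι] [AddCommMonoid M] (f : ι → ι → ι → M) :
    ∑ x, ∑ y, ∑ z, f x y z = ∑ x, ∑ y, ∑ z, f z y x := by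
  calc ∑ x, ∑ y, ∑ z, f x y z = ∑ y, ∑ x, ∑ z, f x y z := Finset.sum_comm
    _ = ∑ y, ∑ z, ∑ x, f x y z := Finset.sum_congr rfl (fun _ _ => Finset.sum_comm)
    _ = ∑ z, ∑ y, ∑ x, f x y z := Finset.sum_comm

private lemma sum3_swap23 {ι M : Type*} [Fintype ι] [AddCommMonoid M] (f : ι → ι → ι → M) :
    ∑ x, ∑ y, ∑ z, f x y z = ∑ x, ∑ y, ∑ z, f x z y :=
  Finset.sum_congr rfl (fun _ _ => Finset.sum_comm)

private lemma normsq_eq (w : ℂ) : ((‖w‖^2 : ℝ) : ℂ) = (starRingEnd ℂ) w * w := by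
  rw [← Complex.normSq_eq_norm_sq, Complex.normSq_eq_conj_mul_self]

end FockHelpers

/-- Fock-space commutator computation (discrete form of the CCR algebra):
with `A = Σ (φ̄(x) a_x − φ(x) a*_x)` and
`V = Σ v₃(x,y,z) a*_x a*_y a*_z a_x a_y a_z` for a symmetric `v₃`, the fifth
iterated commutator is linear in creation/annihilation operators:
`[A,[A,[A,[A,[A,V]]]]] = 360 Σ v₃(x,y,z) |φ(x)|²|φ(y)|² (φ̄(z) a_z + φ(z) a*_z)`. -/
theorem fivefold_commutator_is_linear
    {𝒜 : Type*} [Ring 𝒜] [Algebra ℂ 𝒜]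
    {ι : Type*} [Fintype ι] [DecidableEq ι]
    (a astar : ι → 𝒜)
    -- canonical commutation relations
    (hCCR : ∀ x y, a x * astar y - astar y * a x = if x = y then 1 else 0)
    (haa : ∀ x y, a x * a y = a y * a x)
    (hss : ∀ x y, astar x * astar y = astar y * astar x)
    (φ : ι → ℂ) (v₃ : ι → ι → ι → ℝ)
    -- `v₃` is symmetric under permutations of its three arguments
    (hsym1 : ∀ x y z, v₃ x y z = v₃ y x z)
    (hsym2 : ∀ x y z, v₃ x y z = v₃ x z y)
    (A V : 𝒜)
    (hA : A = ∑ x, ((starRingEnd ℂ) (φ x) • a x - φ x • astar x))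
    (hV : V = ∑ x, ∑ y, ∑ z,
      (v₃ x y z : ℂ) • (astar x * astar y * astar z * (a x * a y * a z))) :
    ⁅A, ⁅A, ⁅A, ⁅A, ⁅A, V⁆⁆⁆⁆⁆ =
      (360 : ℂ) • ∑ x, ∑ y, ∑ z,
        ((v₃ x y z : ℂ) * (‖φ x‖ ^ 2 : ℝ) * (‖φ y‖ ^ 2 : ℝ)) •
          ((starRingEnd ℂ) (φ z) • a z + φ z • astar z) := by
  letI : LieRing 𝒜 := LieRing.ofAssociativeRing
  -- bracket of A with the generators
  have hAa : ∀ w, ⁅A, a w⁆ = φ w • (1:𝒜) := by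
    intro w
    rw [hA, sum_lie']
    have h1 : ∀ x, ⁅(starRingEnd ℂ) (φ x) • a x - φ x • astar x, a w⁆
        = if w = x then φ x • (1:𝒜) else 0 := by
      intro x
      have hc : ⁅astar x, a w⁆ = -(if w = x then (1:𝒜) else 0) := by
        rw [Ring.lie_def, ← hCCR w x]; abel
      have ha0 : ⁅a x, a w⁆ = (0:𝒜) := by rw [Ring.lie_def, haa, sub_self]
      rw [sub_lie, smul_lie, smul_lie, ha0, hc, smul_zero, zero_sub, smul_neg, neg_neg]
      split <;> simp
    simp only [h1, Finset.sum_ite_eq, Finset.mem_univ, if_true]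
  have hAs : ∀ w, ⁅A, astar w⁆ = (starRingEnd ℂ) (φ w) • (1:𝒜) := by
    intro w
    rw [hA, sum_lie']
    have h1 : ∀ x, ⁅(starRingEnd ℂ) (φ x) • a x - φ x • astar x, astar w⁆
        = if w = x then (starRingEnd ℂ) (φ x) • (1:𝒜) else 0 := by
      intro x
      have hc : ⁅a x, astar w⁆ = (if x = w then (1:𝒜) else 0) := by
        rw [Ring.lie_def, hCCR x w]
      have hs0 : ⁅astar x, astar w⁆ = (0:𝒜) := by rw [Ring.lie_def, hss, sub_self]
      rw [sub_lie, smul_lie, smul_lie, hs0, hc, smul_zero, sub_zero]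
      rcases eq_or_ne x w with h | h
      · subst h; simp
      · simp [h, Ne.symm h]
    simp only [h1, Finset.sum_ite_eq, Finset.mem_univ, if_true]
  -- full symmetry of v₃
  have hsym : ∀ x y z, v₃ z y x = v₃ x y z := fun x y z => by
    calc v₃ z y x = v₃ y z x := hsym1 z y x
      _ = v₃ y x z := hsym2 y z x
      _ = v₃ x y z := hsym1 y x z
  -- the fifth commutator of a single normally ordered monomial
  have hkey : ∀ x y z : ι,
      ⁅A, ⁅A, ⁅A, ⁅A, ⁅A, astar x * astar y * astar z * (a x * a y * a z)⁆⁆⁆⁆⁆ =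
      (120:ℂ) • ( ((starRingEnd ℂ) (φ y)*(starRingEnd ℂ) (φ z)*φ x*φ y*φ z) • astar x
        + ((starRingEnd ℂ) (φ x)*(starRingEnd ℂ) (φ z)*φ x*φ y*φ z) • astar y
        + ((starRingEnd ℂ) (φ x)*(starRingEnd ℂ) (φ y)*φ x*φ y*φ z) • astar z
        + ((starRingEnd ℂ) (φ x)*(starRingEnd ℂ) (φ y)*(starRingEnd ℂ) (φ z)*φ y*φ z) • a x
        + ((starRingEnd ℂ) (φ x)*(starRingEnd ℂ) (φ y)*(starRingEnd ℂ) (φ z)*φ x*φ z) • a y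
        + ((starRingEnd ℂ) (φ x)*(starRingEnd ℂ) (φ y)*(starRingEnd ℂ) (φ z)*φ x*φ y) • a z ) :=
    fun x y z => key5 A _ _ _ _ _ _ _ _ _ _ _ _
      (hAs x) (hAs y) (hAs z) (hAa x) (hAa y) (hAa z)
  rw [hV]
  simp only [lie_sum', lie_smul, hkey, smul_add, smul_smul, Finset.sum_add_distrib]
  -- canonical target sums
  have hT : ((120:ℂ) • ∑ x, ∑ y, ∑ z,
        ((v₃ x y z : ℂ) * ((‖φ x‖^2 : ℝ) : ℂ) * ((‖φ y‖^2 : ℝ) : ℂ) * φ z) • astar z)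
      = ∑ x, ∑ y, ∑ z,
        ((120:ℂ) * ((v₃ x y z : ℂ) * ((‖φ x‖^2 : ℝ) : ℂ) * ((‖φ y‖^2 : ℝ) : ℂ) * φ z)) • astar z := by
    simp [Finset.smul_sum, smul_smul]
  have hS : ((120:ℂ) • ∑ x, ∑ y, ∑ z,
        ((v₃ x y z : ℂ) * ((‖φ x‖^2 : ℝ) : ℂ) * ((‖φ y‖^2 : ℝ) : ℂ) * (starRingEnd ℂ) (φ z)) • a z)
      = ∑ x, ∑ y, ∑ z,
        ((120:ℂ) * ((v₃ x y z : ℂ) * ((‖φ x‖^2 : ℝ) : ℂ) * ((‖φ y‖^2 : ℝ) : ℂ) * (starRingEnd ℂ) (φ z))) • a z := by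
    simp [Finset.smul_sum, smul_smul]
  have hA1 : (∑ x, ∑ y, ∑ z,
        ((v₃ x y z : ℂ) * (120 * ((starRingEnd ℂ) (φ y) * (starRingEnd ℂ) (φ z) * φ x * φ y * φ z))) • astar x)
      = (120:ℂ) • ∑ x, ∑ y, ∑ z,
        ((v₃ x y z : ℂ) * ((‖φ x‖^2 : ℝ) : ℂ) * ((‖φ y‖^2 : ℝ) : ℂ) * φ z) • astar z := by
    rw [sum3_swap13 (f := fun x y z =>
      ((v₃ x y z : ℂ) * (120 * ((starRingEnd ℂ) (φ y) * (starRingEnd ℂ) (φ z) * φ x * φ y * φ z))) • astar x), hT]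
    refine Finset.sum_congr rfl fun x _ => Finset.sum_congr rfl fun y _ =>
      Finset.sum_congr rfl fun z _ => ?_
    congr 1
    rw [show ((v₃ z y x : ℝ) : ℂ) = ((v₃ x y z : ℝ) : ℂ) by exact congrArg Complex.ofReal (hsym x y z),
      normsq_eq (φ x), normsq_eq (φ y)]
    ring
  have hA2 : (∑ x, ∑ y, ∑ z,
        ((v₃ x y z : ℂ) * (120 * ((starRingEnd ℂ) (φ x) * (starRingEnd ℂ) (φ z) * φ x * φ y * φ z))) • astar y)
      = (120:ℂ) • ∑ x, ∑ y, ∑ z,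
        ((v₃ x y z : ℂ) * ((‖φ x‖^2 : ℝ) : ℂ) * ((‖φ y‖^2 : ℝ) : ℂ) * φ z) • astar z := by
    rw [sum3_swap23 (f := fun x y z =>
      ((v₃ x y z : ℂ) * (120 * ((starRingEnd ℂ) (φ x) * (starRingEnd ℂ) (φ z) * φ x * φ y * φ z))) • astar y), hT]
    refine Finset.sum_congr rfl fun x _ => Finset.sum_congr rfl fun y _ =>
      Finset.sum_congr rfl fun z _ => ?_
    congr 1
    rw [show ((v₃ x z y : ℝ) : ℂ) = ((v₃ x y z : ℝ) : ℂ) by exact congrArg Complex.ofReal (hsym2 x y z).symm,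
      normsq_eq (φ x), normsq_eq (φ y)]
    ring
  have hA3 : (∑ x, ∑ y, ∑ z,
        ((v₃ x y z : ℂ) * (120 * ((starRingEnd ℂ) (φ x) * (starRingEnd ℂ) (φ y) * φ x * φ y * φ z))) • astar z)
      = (120:ℂ) • ∑ x, ∑ y, ∑ z,
        ((v₃ x y z : ℂ) * ((‖φ x‖^2 : ℝ) : ℂ) * ((‖φ y‖^2 : ℝ) : ℂ) * φ z) • astar z := by
    rw [hT]
    refine Finset.sum_congr rfl fun x _ => Finset.sum_congr rfl fun y _ =>
      Finset.sum_congr rfl fun z _ => ?_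
    congr 1
    rw [normsq_eq (φ x), normsq_eq (φ y)]
    ring
  have hA4 : (∑ x, ∑ y, ∑ z,
        ((v₃ x y z : ℂ) * (120 * ((starRingEnd ℂ) (φ x) * (starRingEnd ℂ) (φ y) * (starRingEnd ℂ) (φ z) * φ y * φ z))) • a x)
      = (120:ℂ) • ∑ x, ∑ y, ∑ z,
        ((v₃ x y z : ℂ) * ((‖φ x‖^2 : ℝ) : ℂ) * ((‖φ y‖^2 : ℝ) : ℂ) * (starRingEnd ℂ) (φ z)) • a z := by
    rw [sum3_swap13 (f := fun x y z =>
      ((v₃ x y z : ℂ) * (120 * ((starRingEnd ℂ) (φ x) * (starRingEnd ℂ) (φ y) * (starRingEnd ℂ) (φ z) * φ y * φ z))) • a x), hS]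
    refine Finset.sum_congr rfl fun x _ => Finset.sum_congr rfl fun y _ =>
      Finset.sum_congr rfl fun z _ => ?_
    congr 1
    rw [show ((v₃ z y x : ℝ) : ℂ) = ((v₃ x y z : ℝ) : ℂ) by exact congrArg Complex.ofReal (hsym x y z),
      normsq_eq (φ x), normsq_eq (φ y)]
    ring
  have hA5 : (∑ x, ∑ y, ∑ z,
        ((v₃ x y z : ℂ) * (120 * ((starRingEnd ℂ) (φ x) * (starRingEnd ℂ) (φ y) * (starRingEnd ℂ) (φ z) * φ x * φ z))) • a y)
      = (120:ℂ) • ∑ x, ∑ y, ∑ z,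
        ((v₃ x y z : ℂ) * ((‖φ x‖^2 : ℝ) : ℂ) * ((‖φ y‖^2 : ℝ) : ℂ) * (starRingEnd ℂ) (φ z)) • a z := by
    rw [sum3_swap23 (f := fun x y z =>
      ((v₃ x y z : ℂ) * (120 * ((starRingEnd ℂ) (φ x) * (starRingEnd ℂ) (φ y) * (starRingEnd ℂ) (φ z) * φ x * φ z))) • a y), hS]
    refine Finset.sum_congr rfl fun x _ => Finset.sum_congr rfl fun y _ =>
      Finset.sum_congr rfl fun z _ => ?_
    congr 1
    rw [show ((v₃ x z y : ℝ) : ℂ) = ((v₃ x y z : ℝ) : ℂ) by exact congrArg Complex.ofReal (hsym2 x y z).symm,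
      normsq_eq (φ x), normsq_eq (φ y)]
    ring
  have hA6 : (∑ x, ∑ y, ∑ z,
        ((v₃ x y z : ℂ) * (120 * ((starRingEnd ℂ) (φ x) * (starRingEnd ℂ) (φ y) * (starRingEnd ℂ) (φ z) * φ x * φ y))) • a z)
      = (120:ℂ) • ∑ x, ∑ y, ∑ z,
        ((v₃ x y z : ℂ) * ((‖φ x‖^2 : ℝ) : ℂ) * ((‖φ y‖^2 : ℝ) : ℂ) * (starRingEnd ℂ) (φ z)) • a z := by
    rw [hS]
    refine Finset.sum_congr rfl fun x _ => Finset.sum_congr rfl fun y _ =>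
      Finset.sum_congr rfl fun z _ => ?_
    congr 1
    rw [normsq_eq (φ x), normsq_eq (φ y)]
    ring
  rw [hA1, hA2, hA3, hA4, hA5, hA6]
  module
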